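/- Let (μₙ), (pₙ), (Eₙ) be sequences of reals with μₙ + pₙ > 0, μₙ + 3pₙ ≥ 0, μₙ ≥ 0, denominators −(1/3)μₙ − pₙ + Eₙ ≠ 0, and suppose the ratio rₙ = ((2/3)μₙ + Eₙ)/(−(1/3)μₙ − pₙ + Eₙ) → 1, while (μₙ + 3pₙ)/(μₙ + pₙ) remains bounded. Then |Eₙ|/(μₙ + pₙ) → ∞. -/
import Mathlib


open Filter

/-- Limiting-sequence form of Proposition 4: if the apparent-horizon slopes tend
to 1 while `(μ + 3p)/(μ + p)` stays bounded, then `|E|/(μ + p)` diverges. -/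
theorem stmt_5 (μ p E : ℕ → ℝ)
    (hμp : ∀ n, μ n + p n > 0) (hsec : ∀ n, μ n + 3 * p n ≥ 0) (hμ : ∀ n, μ n ≥ 0)
    (hd : ∀ n, -(1 / 3) * μ n - p n + E n ≠ 0)
    (hr : Tendsto (fun n => ((2 / 3) * μ n + E n) / (-(1 / 3) * μ n - p n + E n))
      atTop (nhds 1))
    (hbdd : ∃ M : ℝ, ∀ n, |(μ n + 3 * p n) / (μ n + p n)| ≤ M) :
    Tendsto (fun n => |E n| / (μ n + p n)) atTop atTop := by
  obtain ⟨M, hM⟩ := hbdd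
  set d : ℕ → ℝ := fun n => -(1 / 3) * μ n - p n + E n with hdef
  -- step 1 : (μ+p)/d → 0
  have h1 : Tendsto (fun n => (μ n + p n) / d n) atTop (nhds 0) := by
    have := hr.sub (tendsto_const_nhds (x := (1:ℝ)))
    simp only [sub_self] at this
    refine this.congr fun n => ?_
    rw [div_sub_one (hd n)]
    congr 1
    ring
  -- step 2 : |(μ+p)/d| → 0 within (0, ∞)
  have hpos : ∀ n, 0 < |(μ n + p n) / d n| := by
    intro n
    exact abs_pos.mpr (div_ne_zero (ne_of_gt (hμp n)) (hd n))
  have h2 : Tendsto (fun n => |(μ n + p n) / d n|) atTop (nhdsWithin 0 (Set.Ioi 0)) := by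
    exact tendsto_nhdsWithin_of_tendsto_nhds_of_eventually_within _ (by simpa using h1.abs)
      (Eventually.of_forall hpos)
  -- step 3 : |d/(μ+p)| → ∞
  have h3 : Tendsto (fun n => |d n / (μ n + p n)|) atTop atTop := by
    have := tendsto_inv_nhdsGT_zero.comp h2
    refine this.congr fun n => ?_
    rw [Function.comp_apply, ← abs_inv, inv_div]
  -- step 4 : pointwise bound |d/(μ+p)| - M/3 ≤ |E|/(μ+p)
  have h4 : ∀ n, |d n / (μ n + p n)| - M / 3 ≤ |E n| / (μ n + p n) := by
    intro n
    have hp := hμp n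
    have hE : |d n| ≤ |E n| + (1/3) * |μ n + 3 * p n| := by
      have : d n = E n + (-(1/3)) * (μ n + 3 * p n) := by simp [hdef]; ring
      calc |d n| ≤ |E n| + |(-(1/3)) * (μ n + 3 * p n)| := by
            rw [this]; exact abs_add_le _ _
        _ = |E n| + (1/3) * |μ n + 3 * p n| := by rw [abs_mul]; norm_num
    have hM' : (1/3) * |μ n + 3 * p n| / (μ n + p n) ≤ M / 3 := by
      have := hM n
      rw [abs_div, abs_of_pos hp] at this
      calc (1/3) * |μ n + 3 * p n| / (μ n + p n)
          = (1/3) * (|μ n + 3 * p n| / (μ n + p n)) := by ring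
        _ ≤ (1/3) * M := by nlinarith
        _ = M / 3 := by ring
    have : |d n| / (μ n + p n) ≤ |E n| / (μ n + p n) + (1/3) * |μ n + 3 * p n| / (μ n + p n) := by
      rw [← add_div]
      exact div_le_div_of_nonneg_right hE hp.le
    rw [abs_div, abs_of_pos hp]
    linarith
  exact tendsto_atTop_mono h4 (tendsto_atTop_add_const_right _ _ h3)
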